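/- Let C be a conilpotent coaugmented coalgebra over a field k, M a left C-comodule, and f: M → C ⊗_k U a morphism of left C-comodules into a cofree comodule. Then f is injective if and only if the induced map H⁰(C, f): H⁰(C, M) → U is injective. -/

import Mathlib

open TensorProduct

noncomputable section

/-- The image of the coaugmentation `k → C`: the line spanned by the coaugmentation
point `g`. -/
def Caug (k : Type) [Field k] (C : Type) [AddCommGroup C] [Module k C] (g : C) :
    Submodule k C := Submodule.span k {g}

/-- The tensor powers `C₊^{⊗(m+1)}` of the coaugmentation cokernel `C₊ = C/k`. -/
def Tp (k : Type) [Field k] (C : Type) [AddCommGroup C] [Module k C] (g : C) :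
    ℕ → ModuleCat k
  | 0 => ModuleCat.of k (C ⧸ Caug k C g)
  | m + 1 => ModuleCat.of k ((C ⧸ Caug k C g) ⊗[k] (Tp k C g m))

/-- The iterated comultiplication map `C → C₊^{⊗(m+1)}` of a coaugmented coalgebra. -/
def Phi (k : Type) [Field k] (C : Type) [AddCommGroup C] [Module k C] [Coalgebra k C]
    (g : C) : ∀ m : ℕ, C →ₗ[k] Tp k C g m
  | 0 => (Caug k C g).mkQ
  | m + 1 => (TensorProduct.map (Caug k C g).mkQ (Phi k C g m)).comp
      (Coalgebra.comul (R := k))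

/-- The reduced coaction `M → C₊ ⊗ M` of a left `C`-comodule `(M, ρ)`; its kernel is
`H⁰(C, M)`, the maximal subcomodule of `M` with trivial coaction. -/
def redCoact (k : Type) [Field k] (C : Type) [AddCommGroup C] [Module k C]
    (g : C) (M : Type) [AddCommGroup M] [Module k M] (ρ : M →ₗ[k] C ⊗[k] M) :
    M →ₗ[k] (C ⧸ Caug k C g) ⊗[k] M :=
  (LinearMap.rTensor M (Caug k C g).mkQ).comp ρ

/-- The coaction of `C` on the cofree left `C`-comodule `C ⊗ U`. -/
def cofreeCoact (k : Type) [Field k] (C : Type) [AddCommGroup C] [Module k C]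
    [Coalgebra k C] (U : Type) [AddCommGroup U] [Module k U] :
    C ⊗[k] U →ₗ[k] C ⊗[k] (C ⊗[k] U) :=
  (TensorProduct.assoc k C C U).toLinearMap.comp
    (LinearMap.rTensor U (Coalgebra.comul (R := k)))

/-- The map `C ⊗ U → U` given by `counit ⊗ id` followed by `k ⊗ U ≅ U`; it identifies
`H⁰(C, C ⊗ U)` with `U`. -/
def cofreeProj (k : Type) [Field k] (C : Type) [AddCommGroup C] [Module k C]
    [Coalgebra k C] (U : Type) [AddCommGroup U] [Module k U] : C ⊗[k] U →ₗ[k] U :=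
  (TensorProduct.lid k U).toLinearMap.comp
    (LinearMap.rTensor U (Coalgebra.counit (R := k) (A := C)))

section Aux

variable (k C : Type) [Field k] [AddCommGroup C] [Module k C] [Coalgebra k C] (g : C)

/-- The reduced comultiplication on `C₊`. -/
def redComul (hg1 : Coalgebra.comul (R := k) g = g ⊗ₜ[k] g) :
    (C ⧸ Caug k C g) →ₗ[k] (C ⧸ Caug k C g) ⊗[k] (C ⧸ Caug k C g) :=
  Submodule.liftQ _ ((TensorProduct.map (Caug k C g).mkQ (Caug k C g).mkQ).comp
      (Coalgebra.comul (R := k))) <| by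
    rw [Caug, Submodule.span_singleton_le_iff_mem]
    simp only [SetLike.mem_coe, LinearMap.mem_ker, LinearMap.comp_apply, hg1,
      TensorProduct.map_tmul]
    rw [show ((Submodule.span k {g}).mkQ g) = 0 by
      simp [Submodule.Quotient.mk_eq_zero, Submodule.mem_span_singleton_self]]
    simp

/-- `Phi (m+1)` factors through `Phi m`. -/
def Gmap (hg1 : Coalgebra.comul (R := k) g = g ⊗ₜ[k] g) :
    ∀ m : ℕ, Tp k C g m →ₗ[k] Tp k C g (m + 1)
  | 0 => redComul k C g hg1
  | m + 1 => LinearMap.lTensor (C ⧸ Caug k C g) (Gmap hg1 m)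

lemma phi_succ (hg1 : Coalgebra.comul (R := k) g = g ⊗ₜ[k] g) : ∀ (m : ℕ) (c : C),
    Phi k C g (m + 1) c = Gmap k C g hg1 m (Phi k C g m c)
  | 0, c => by
    show TensorProduct.map (Caug k C g).mkQ ((Caug k C g).mkQ) (Coalgebra.comul c)
      = redComul k C g hg1 ((Caug k C g).mkQ c)
    rfl
  | m + 1, c => by
    show TensorProduct.map (Caug k C g).mkQ (Phi k C g (m+1)) (Coalgebra.comul c)
      = LinearMap.lTensor _ (Gmap k C g hg1 m)
          (TensorProduct.map (Caug k C g).mkQ (Phi k C g m) (Coalgebra.comul c))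
    have h1 : Phi k C g (m+1) = (Gmap k C g hg1 m).comp (Phi k C g m) :=
      LinearMap.ext fun c => phi_succ hg1 m c
    rw [h1]
    have : TensorProduct.map (Caug k C g).mkQ ((Gmap k C g hg1 m).comp (Phi k C g m))
        = (LinearMap.lTensor _ (Gmap k C g hg1 m)).comp
            (TensorProduct.map (Caug k C g).mkQ (Phi k C g m)) := by
      rw [LinearMap.lTensor, ← TensorProduct.map_comp, LinearMap.id_comp]
    rw [this, LinearMap.comp_apply]

lemma phi_mono (hg1 : Coalgebra.comul (R := k) g = g ⊗ₜ[k] g) (m j : ℕ) (c : C) (h : Phi k C g m c = 0) : Phi k C g (m + j) c = 0 := by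
  induction j with
  | zero => exact h
  | succ j ih => rw [show m + (j+1) = (m+j) + 1 from rfl, phi_succ k C g hg1, ih, map_zero]

end Aux

section Aux2

variable (k C : Type) [Field k] [AddCommGroup C] [Module k C] [Coalgebra k C] (g : C)
variable (M : Type) [AddCommGroup M] [Module k M]

lemma conil_tensor (hg1 : Coalgebra.comul (R := k) g = g ⊗ₜ[k] g)
    (hconil : ∀ c : C, ∃ m, Phi k C g m c = 0) (t : C ⊗[k] M) :
    ∃ n, ∀ j, LinearMap.rTensor M (Phi k C g (n + j)) t = 0 := by
  induction t using TensorProduct.induction_on with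
  | zero => exact ⟨0, fun j => map_zero _⟩
  | tmul c m =>
    obtain ⟨n, hn⟩ := hconil c
    exact ⟨n, fun j => by
      rw [LinearMap.rTensor_tmul, phi_mono k C g hg1 n j c hn, TensorProduct.zero_tmul]⟩
  | add t₁ t₂ ih₁ ih₂ =>
    obtain ⟨n₁, h₁⟩ := ih₁
    obtain ⟨n₂, h₂⟩ := ih₂
    refine ⟨n₁ + n₂, fun j => ?_⟩
    rw [map_add, show n₁ + n₂ + j = n₁ + (n₂ + j) from by ring, h₁,
      show n₁ + (n₂ + j) = n₂ + (n₁ + j) from by ring, h₂, add_zero]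

/-- naturality of the associator -/
lemma assoc_symm_nat {X Y : Type} [AddCommGroup X] [Module k X] [AddCommGroup Y] [Module k Y]
    (f₁ : C →ₗ[k] X) (f₂ : C →ₗ[k] Y) (t : C ⊗[k] (C ⊗[k] M)) :
    LinearMap.rTensor M (TensorProduct.map f₁ f₂) ((TensorProduct.assoc k C C M).symm t)
      = (TensorProduct.assoc k X Y M).symm
          (TensorProduct.map f₁ (LinearMap.rTensor M f₂) t) := by
  induction t using TensorProduct.induction_on with
  | zero => simp
  | tmul c s =>
    induction s using TensorProduct.induction_on with
    | zero => simp
    | tmul c' m => simp [TensorProduct.assoc_symm_tmul]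
    | add s₁ s₂ ih₁ ih₂ =>
      rw [TensorProduct.tmul_add, map_add, map_add, ih₁, ih₂, ← map_add, ← map_add,
        ← TensorProduct.tmul_add]
  | add t₁ t₂ ih₁ ih₂ => rw [map_add, map_add, ih₁, ih₂, map_add, map_add]

lemma psi_succ (ρ : M →ₗ[k] C ⊗[k] M) (hcoassoc : ∀ m : M,
      (TensorProduct.assoc k C C M) ((LinearMap.rTensor M (Coalgebra.comul (R := k))) (ρ m))
        = (LinearMap.lTensor C ρ) (ρ m)) (n : ℕ) (x : M) :
    LinearMap.rTensor M (Phi k C g (n + 1)) (ρ x)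
      = (TensorProduct.assoc k _ _ M).symm
          (TensorProduct.map (Caug k C g).mkQ
            ((LinearMap.rTensor M (Phi k C g n)).comp ρ) (ρ x)) := by
  have h0 : Phi k C g (n + 1)
      = (TensorProduct.map (Caug k C g).mkQ (Phi k C g n)).comp (Coalgebra.comul (R := k)) :=
    rfl
  have h1 : LinearMap.rTensor M (Coalgebra.comul (R := k)) (ρ x)
      = (TensorProduct.assoc k C C M).symm ((LinearMap.lTensor C ρ) (ρ x)) := by
    rw [← hcoassoc x, LinearEquiv.symm_apply_apply]
  show LinearMap.rTensor M ((TensorProduct.map (Caug k C g).mkQ (Phi k C g n)).comp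
      (Coalgebra.comul (R := k))) (ρ x) = _
  rw [LinearMap.rTensor_comp, LinearMap.comp_apply, h1]
  have h2 : TensorProduct.map (Caug k C g).mkQ (LinearMap.rTensor M (Phi k C g n))
        ((LinearMap.lTensor C ρ) (ρ x))
      = TensorProduct.map (Caug k C g).mkQ ((LinearMap.rTensor M (Phi k C g n)).comp ρ)
        (ρ x) := by
    rw [← LinearMap.comp_apply (TensorProduct.map _ _), LinearMap.map_comp_lTensor]
  exact (assoc_symm_nat k C M (Caug k C g).mkQ (Phi k C g n)
    ((LinearMap.lTensor C ρ) (ρ x))).trans (congrArg _ h2)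

end Aux2

section Aux3

variable (k C : Type) [Field k] [AddCommGroup C] [Module k C] [Coalgebra k C] (g : C)
variable (M : Type) [AddCommGroup M] [Module k M]

lemma descent (ρ : M →ₗ[k] C ⊗[k] M)
    (hcoassoc : ∀ m : M,
      (TensorProduct.assoc k C C M) ((LinearMap.rTensor M (Coalgebra.comul (R := k))) (ρ m))
        = (LinearMap.lTensor C ρ) (ρ m))
    (U : Type) [AddCommGroup U] [Module k U] (f : M →ₗ[k] C ⊗[k] U)
    (hf : (LinearMap.lTensor C f).comp ρ = (cofreeCoact k C U).comp f) :
    ∀ n : ℕ, ∀ x : M, f x = 0 → LinearMap.rTensor M (Phi k C g n) (ρ x) = 0 → x ≠ 0 →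
      ∃ y : M, f y = 0 ∧ y ≠ 0 ∧ redCoact k C g M ρ y = 0 := by
  intro n
  induction n with
  | zero =>
    intro x hx h0 hne
    exact ⟨x, hx, hne, h0⟩
  | succ n ih =>
    intro x hx h0 hne
    by_cases hred : redCoact k C g M ρ x = 0
    · exact ⟨x, hx, hne, hred⟩
    set Q := C ⧸ Caug k C g with hQ
    set t : Q ⊗[k] M := redCoact k C g M ρ x with ht
    set Ψ : M →ₗ[k] (Tp k C g n) ⊗[k] M := (LinearMap.rTensor M (Phi k C g n)).comp ρ with hΨ
    have claim1 : LinearMap.lTensor Q f t = 0 := by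
      have : LinearMap.lTensor Q f t
          = LinearMap.rTensor (C ⊗[k] U) (Caug k C g).mkQ ((LinearMap.lTensor C f) (ρ x)) := by
        rw [ht, redCoact, LinearMap.comp_apply, ← LinearMap.comp_apply (LinearMap.lTensor Q f),
          LinearMap.lTensor_comp_rTensor, ← LinearMap.rTensor_comp_lTensor,
          LinearMap.comp_apply]
      have hfx : (LinearMap.lTensor C f) (ρ x) = cofreeCoact k C U (f x) :=
        LinearMap.congr_fun hf x
      rw [this, hfx, hx, map_zero, map_zero]
    have claim2 : LinearMap.lTensor Q Ψ t = 0 := by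
      have e1 : LinearMap.lTensor Q Ψ t
          = TensorProduct.map (Caug k C g).mkQ Ψ (ρ x) := by
        rw [ht, redCoact, LinearMap.comp_apply, ← LinearMap.comp_apply (LinearMap.lTensor Q Ψ),
          LinearMap.lTensor_comp_rTensor]
      have e2 := psi_succ k C g M ρ hcoassoc n x
      rw [h0] at e2
      have := (LinearEquiv.map_eq_zero_iff _).mp e2.symm
      rw [e1, this]
    -- first exactness step
    have ex1 : Function.Exact (LinearMap.lTensor Q (LinearMap.ker f).subtype)
        (LinearMap.lTensor Q f) :=
      Module.Flat.lTensor_exact Q (LinearMap.exact_subtype_ker_map f)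
    obtain ⟨t₁, ht₁⟩ := (ex1 t).mp claim1
    set g₂ : (LinearMap.ker f) →ₗ[k] (Tp k C g n) ⊗[k] M :=
      Ψ.comp (LinearMap.ker f).subtype with hg₂
    have claim2' : LinearMap.lTensor Q g₂ t₁ = 0 := by
      rw [hg₂, LinearMap.lTensor_comp, LinearMap.comp_apply, ht₁, claim2]
    have ex2 : Function.Exact (LinearMap.lTensor Q (LinearMap.ker g₂).subtype)
        (LinearMap.lTensor Q g₂) :=
      Module.Flat.lTensor_exact Q (LinearMap.exact_subtype_ker_map g₂)
    obtain ⟨t₂, ht₂⟩ := (ex2 t₁).mp claim2'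
    have ht₁ne : t₁ ≠ 0 := by
      intro h
      rw [h, map_zero] at ht₁
      exact hred ht₁.symm
    -- produce a nonzero element of ker g₂
    have : ∃ z : LinearMap.ker g₂, z ≠ 0 := by
      by_contra hcon
      push_neg at hcon
      have hsub : (LinearMap.ker g₂).subtype = 0 := by
        ext z
        rw [hcon z]
        simp
      rw [hsub, LinearMap.lTensor_zero] at ht₂
      exact ht₁ne (ht₂.symm ▸ (by simp))
    obtain ⟨z, hz⟩ := this
    refine ih ((z : LinearMap.ker f) : M) (z : LinearMap.ker f).2 ?_ ?_
    · exact z.2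
    · intro h
      apply hz
      ext
      exact h
end Aux3

section Aux4

variable (k C : Type) [Field k] [AddCommGroup C] [Module k C] [Coalgebra k C] (g : C)
variable (U : Type) [AddCommGroup U] [Module k U]

lemma helperA (s : C ⊗[k] C) (u : U) :
    (TensorProduct.lid k (C ⊗[k] U))
      (LinearMap.rTensor (C ⊗[k] U) (Coalgebra.counit (R := k) (A := C))
        ((TensorProduct.assoc k C C U) (s ⊗ₜ[k] u)))
    = ((TensorProduct.lid k C) (LinearMap.rTensor C (Coalgebra.counit (R := k) (A := C)) s))
        ⊗ₜ[k] u := by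
  induction s using TensorProduct.induction_on with
  | zero => simp
  | tmul a b => simp [TensorProduct.assoc_tmul, TensorProduct.smul_tmul']
  | add s₁ s₂ ih₁ ih₂ =>
    simp only [TensorProduct.add_tmul, map_add, ih₁, ih₂]

lemma counit_cofree (x : C ⊗[k] U) :
    (TensorProduct.lid k (C ⊗[k] U))
      (LinearMap.rTensor (C ⊗[k] U) (Coalgebra.counit (R := k) (A := C))
        (cofreeCoact k C U x)) = x := by
  induction x using TensorProduct.induction_on with
  | zero => simp
  | tmul c u =>
    rw [cofreeCoact, LinearMap.comp_apply]
    show (TensorProduct.lid k (C ⊗[k] U))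
      (LinearMap.rTensor (C ⊗[k] U) (Coalgebra.counit (R := k) (A := C))
        ((TensorProduct.assoc k C C U)
          ((LinearMap.rTensor U (Coalgebra.comul (R := k))) (c ⊗ₜ[k] u)))) = c ⊗ₜ[k] u
    rw [LinearMap.rTensor_tmul, helperA, Coalgebra.rTensor_counit_comul]
    simp
  | add x₁ x₂ ih₁ ih₂ => rw [map_add, map_add, map_add, ih₁, ih₂]

lemma helperB (s : C ⊗[k] C) (u : U) :
    LinearMap.lTensor C (cofreeProj k C U) ((TensorProduct.assoc k C C U) (s ⊗ₜ[k] u))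
      = TensorProduct.map LinearMap.id
          ((LinearMap.toSpanSingleton k U u).comp (Coalgebra.counit (R := k) (A := C))) s := by
  induction s using TensorProduct.induction_on with
  | zero => simp
  | tmul a b =>
    simp [TensorProduct.assoc_tmul, cofreeProj, LinearMap.toSpanSingleton_apply]
  | add s₁ s₂ ih₁ ih₂ =>
    rw [TensorProduct.add_tmul, map_add, map_add, ih₁, ih₂, map_add]

lemma proj_cofree (x : C ⊗[k] U) :
    LinearMap.lTensor C (cofreeProj k C U) (cofreeCoact k C U x) = x := by
  induction x using TensorProduct.induction_on with
  | zero => simp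
  | tmul c u =>
    rw [cofreeCoact, LinearMap.comp_apply]
    show LinearMap.lTensor C (cofreeProj k C U)
      ((TensorProduct.assoc k C C U)
        ((LinearMap.rTensor U (Coalgebra.comul (R := k))) (c ⊗ₜ[k] u))) = c ⊗ₜ[k] u
    rw [LinearMap.rTensor_tmul, helperB]
    have : TensorProduct.map (LinearMap.id (M := C))
        ((LinearMap.toSpanSingleton k U u).comp (Coalgebra.counit (R := k) (A := C)))
        = (LinearMap.lTensor C (LinearMap.toSpanSingleton k U u)).comp
            (LinearMap.lTensor C (Coalgebra.counit (R := k) (A := C))) := by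
      rw [← LinearMap.lTensor_comp]
      rfl
    rw [this, LinearMap.comp_apply]
    show LinearMap.lTensor C (LinearMap.toSpanSingleton k U u)
      ((Coalgebra.counit (R := k)).lTensor C (Coalgebra.comul (R := k) c)) = c ⊗ₜ[k] u
    rw [Coalgebra.lTensor_counit_comul, LinearMap.lTensor_tmul,
      LinearMap.toSpanSingleton_apply, one_smul]
  | add x₁ x₂ ih₁ ih₂ => rw [map_add, map_add, ih₁, ih₂]

lemma caug_tensor (X : Type) [AddCommGroup X] [Module k X] (w : (Caug k C g) ⊗[k] X) :
    ∃ x : X, w = (⟨g, Submodule.mem_span_singleton_self g⟩ : Caug k C g) ⊗ₜ[k] x := by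
  induction w using TensorProduct.induction_on with
  | zero => exact ⟨0, by rw [TensorProduct.tmul_zero]⟩
  | tmul a x =>
    obtain ⟨c, hc⟩ := Submodule.mem_span_singleton.mp a.2
    refine ⟨c • x, ?_⟩
    have ha : a = c • (⟨g, Submodule.mem_span_singleton_self g⟩ : Caug k C g) :=
      Subtype.ext hc.symm
    rw [ha, TensorProduct.smul_tmul]
  | add w₁ w₂ ih₁ ih₂ =>
    obtain ⟨x₁, rfl⟩ := ih₁
    obtain ⟨x₂, rfl⟩ := ih₂
    exact ⟨x₁ + x₂, by rw [TensorProduct.tmul_add]⟩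

end Aux4

section Aux5

variable (k C : Type) [Field k] [AddCommGroup C] [Module k C] [Coalgebra k C] (g : C)
variable (M : Type) [AddCommGroup M] [Module k M]
variable (U : Type) [AddCommGroup U] [Module k U]

lemma mem_ker_eq (hg2 : Coalgebra.counit (R := k) g = 1)
    (ρ : M →ₗ[k] C ⊗[k] M) (f : M →ₗ[k] C ⊗[k] U)
    (hf : (LinearMap.lTensor C f).comp ρ = (cofreeCoact k C U).comp f)
    (m : M) (hm : redCoact k C g M ρ m = 0) :
    f m = g ⊗ₜ[k] cofreeProj k C U (f m) := by
  -- cofree coaction of `f m` is killed by reduction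
  have h1 : LinearMap.rTensor (C ⊗[k] U) (Caug k C g).mkQ (cofreeCoact k C U (f m)) = 0 := by
    have hfx : cofreeCoact k C U (f m) = (LinearMap.lTensor C f) (ρ m) :=
      (LinearMap.congr_fun hf m).symm
    rw [hfx, ← LinearMap.comp_apply, LinearMap.rTensor_comp_lTensor,
      ← LinearMap.lTensor_comp_rTensor, LinearMap.comp_apply]
    have : (LinearMap.rTensor M (Caug k C g).mkQ) (ρ m) = 0 := hm
    rw [this, map_zero]
  have ex : Function.Exact (LinearMap.rTensor (C ⊗[k] U) (Caug k C g).subtype)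
      (LinearMap.rTensor (C ⊗[k] U) (Caug k C g).mkQ) :=
    Module.Flat.rTensor_exact (C ⊗[k] U) (LinearMap.exact_subtype_mkQ (Caug k C g))
  obtain ⟨w, hw⟩ := (ex _).mp h1
  obtain ⟨v, rfl⟩ := caug_tensor k C g (C ⊗[k] U) w
  rw [LinearMap.rTensor_tmul] at hw
  have hsub : (Caug k C g).subtype ⟨g, Submodule.mem_span_singleton_self g⟩ = g := rfl
  rw [hsub] at hw
  -- identify v with f m using the counit
  have h2 : f m = v := by
    have := counit_cofree k C U (f m)
    rw [← hw, LinearMap.rTensor_tmul, hg2] at this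
    rw [← this]
    simp
  rw [← h2] at hw
  -- conclude via cofreeProj
  have h3 := proj_cofree k C U (f m)
  rw [← hw, LinearMap.lTensor_tmul] at h3
  exact h3.symm

end Aux5


/-- Let `C` be a conilpotent coaugmented coalgebra over a field `k`, `M` a left
`C`-comodule, and `f : M → C ⊗ U` a morphism of left `C`-comodules into a cofree
comodule.  Then `f` is injective if and only if the induced map
`H⁰(C, f) : H⁰(C, M) → H⁰(C, C ⊗ U) = U` is injective, i.e. if and only if the composite
`M → C ⊗ U → U` is injective on `H⁰(C, M) = ker (M → C₊ ⊗ M)`. -/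
theorem stmt_9 (k C : Type) [Field k] [AddCommGroup C] [Module k C] [Coalgebra k C]
    (g : C) (hg1 : Coalgebra.comul (R := k) g = g ⊗ₜ[k] g)
    (hg2 : Coalgebra.counit (R := k) g = 1)
    (hconil : ∀ c : C, ∃ m, Phi k C g m c = 0)
    (M : Type) [AddCommGroup M] [Module k M] (ρ : M →ₗ[k] C ⊗[k] M)
    (hcounit : ∀ m : M,
      (TensorProduct.lid k M) ((LinearMap.rTensor M (Coalgebra.counit (R := k))) (ρ m)) = m)
    (hcoassoc : ∀ m : M,
      (TensorProduct.assoc k C C M) ((LinearMap.rTensor M (Coalgebra.comul (R := k))) (ρ m))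
        = (LinearMap.lTensor C ρ) (ρ m))
    (U : Type) [AddCommGroup U] [Module k U] (f : M →ₗ[k] C ⊗[k] U)
    (hf : (LinearMap.lTensor C f).comp ρ = (cofreeCoact k C U).comp f) :
    Function.Injective f ↔
      Set.InjOn (fun m : M => cofreeProj k C U (f m))
        (LinearMap.ker (redCoact k C g M ρ)) := by
  constructor
  · intro hinj m₁ hm₁ m₂ hm₂ heq
    have h₁ : redCoact k C g M ρ m₁ = 0 := hm₁
    have h₂ : redCoact k C g M ρ m₂ = 0 := hm₂
    have e₁ := mem_ker_eq k C g M U hg2 ρ f hf m₁ h₁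
    have e₂ := mem_ker_eq k C g M U hg2 ρ f hf m₂ h₂
    apply hinj
    rw [e₁, e₂]
    simpa using congrArg (fun u => g ⊗ₜ[k] u) heq
  · intro hinj
    rw [injective_iff_map_eq_zero]
    intro x hx
    by_contra hne
    obtain ⟨n, hn⟩ := conil_tensor k C g M hg1 hconil (ρ x)
    obtain ⟨y, hy1, hy2, hy3⟩ :=
      descent k C g M ρ hcoassoc U f hf (n + 0) x hx (hn 0) hne
    apply hy2
    have hmem : y ∈ (LinearMap.ker (redCoact k C g M ρ) : Set M) := by
      simp [LinearMap.mem_ker, hy3]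
    have hmem0 : (0 : M) ∈ (LinearMap.ker (redCoact k C g M ρ) : Set M) := by
      simp
    have : cofreeProj k C U (f y) = cofreeProj k C U (f 0) := by
      rw [hy1, map_zero, map_zero, map_zero]
    exact hinj hmem hmem0 this
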